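/- For all integers m ≥ 1, j ≥ 2, and 0 ≤ p ≤ m, the number of m(j−1)-element subsets of {1,…,m(2j−3)+p} in which no two elements differ by exactly m equals j^p; that is, C_m(m(2j−3)+p, m(j−1)) = j^p. Equivalently, the n-tile tiling triangle entry ⟨m(j−1)+p, m(j−1)⟩_m equals j^p. -/

import Mathlib

open Finset

/-- `Cm m N k` is the number of `k`-element subsets of `{1, …, N}` in which
no two elements differ by exactly `m`. -/
def Cm (m N k : ℕ) : ℕ :=
  (((Finset.Icc 1 N).powersetCard k).filter (fun S => ∀ a ∈ S, a + m ∉ S)).card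

namespace Stmt13

/-- The canonical independent set: evens below `2t`, odds from `2t+1` to `2n-1`. -/
def Phi (n t : ℕ) : Finset ℕ :=
  ((Finset.range t).image (fun a => 2 * a)) ∪ ((Finset.Ico t n).image (fun a => 2 * a + 1))

lemma mem_Phi {n t x : ℕ} :
    x ∈ Phi n t ↔ (∃ a, a < t ∧ x = 2 * a) ∨ (∃ a, t ≤ a ∧ a < n ∧ x = 2 * a + 1) := by
  simp only [Phi, mem_union, mem_image, mem_range, mem_Ico]
  constructor
  · rintro (⟨a, h, rfl⟩ | ⟨a, ⟨h1, h2⟩, rfl⟩)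
    · exact Or.inl ⟨a, h, rfl⟩
    · exact Or.inr ⟨a, h1, h2, rfl⟩
  · rintro (⟨a, h, rfl⟩ | ⟨a, h1, h2, rfl⟩)
    · exact Or.inl ⟨a, h, rfl⟩
    · exact Or.inr ⟨a, ⟨h1, h2⟩, rfl⟩

lemma Phi_subset {n t : ℕ} (ht : t ≤ n) : Phi n t ⊆ range (2 * n) := by
  intro x hx
  rw [mem_Phi] at hx
  rw [mem_range]
  rcases hx with ⟨a, h, rfl⟩ | ⟨a, h1, h2, rfl⟩ <;> omega

lemma Phi_top_subset {n : ℕ} : Phi n n ⊆ range (2 * n - 1) := by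
  intro x hx
  rw [mem_Phi] at hx
  rw [mem_range]
  rcases hx with ⟨a, h, rfl⟩ | ⟨a, h1, h2, rfl⟩ <;> omega

lemma Phi_nc {n t a : ℕ} (h1 : a ∈ Phi n t) (h2 : a + 1 ∈ Phi n t) : False := by
  rw [mem_Phi] at h1 h2
  rcases h1 with ⟨b, hb, he⟩ | ⟨b, hb1, hb2, he⟩ <;>
    rcases h2 with ⟨c, hc, he2⟩ | ⟨c, hc1, hc2, he2⟩ <;> omega

lemma Phi_filter_even {n t : ℕ} :
    (Phi n t).filter (fun x => x % 2 = 0) = (Finset.range t).image (fun a => 2 * a) := by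
  ext x
  simp only [mem_filter, mem_Phi, mem_image, mem_range]
  constructor
  · rintro ⟨⟨a, h, rfl⟩ | ⟨a, h1, h2, rfl⟩, he⟩
    · exact ⟨a, h, rfl⟩
    · omega
  · rintro ⟨a, h, rfl⟩
    exact ⟨Or.inl ⟨a, h, rfl⟩, by omega⟩

lemma Phi_evencount {n t : ℕ} :
    ((Phi n t).filter (fun x => x % 2 = 0)).card = t := by
  rw [Phi_filter_even, Finset.card_image_of_injective _ (fun a b h => by omega),
    Finset.card_range]

lemma Phi_card {n t : ℕ} (ht : t ≤ n) : (Phi n t).card = n := by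
  rw [Phi, Finset.card_union_of_disjoint, Finset.card_image_of_injective _ (fun a b h => by omega),
    Finset.card_image_of_injective _ (fun a b h => by omega), Finset.card_range, Nat.card_Ico]
  · omega
  · rw [Finset.disjoint_left]
    rintro x hx hy
    simp only [mem_image, mem_range, mem_Ico] at hx hy
    obtain ⟨a, _, rfl⟩ := hx
    obtain ⟨b, _, hb⟩ := hy
    omega

lemma nc_card_le {L : ℕ} {T : Finset ℕ} (hT : T ⊆ range L)
    (hnc : ∀ a ∈ T, a + 1 ∉ T) : T.card ≤ (L + 1) / 2 := by
  have h := Finset.card_le_card_of_injOn (fun x => x / 2)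
    (t := range ((L + 1) / 2))
    (fun x hx => by
      have hx' := mem_range.mp (hT hx)
      rw [Finset.mem_coe, mem_range]
      show x / 2 < (L + 1) / 2
      omega) ?_
  · simpa using h
  · intro a ha b hb hab
    simp only at hab
    by_contra hne
    rcases Nat.lt_or_ge a b with h' | h'
    · have hb' : b = a + 1 := by omega
      exact hnc a ha (hb' ▸ hb)
    · have ha' : a = b + 1 := by omega
      exact hnc b hb (ha' ▸ ha)

lemma classify_odd (n : ℕ) : ∀ T : Finset ℕ, T ⊆ range (2 * n + 1) →
    (∀ a ∈ T, a + 1 ∉ T) → T.card = n + 1 → T = Phi (n + 1) (n + 1) := by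
  induction n with
  | zero =>
    intro T hT hnc hc
    obtain ⟨a, rfl⟩ := Finset.card_eq_one.mp hc
    have ha : a ∈ range 1 := hT (mem_singleton_self a)
    rw [mem_range] at ha
    have ha0 : a = 0 := by omega
    subst ha0
    ext x
    simp only [mem_singleton, mem_Phi]
    constructor
    · rintro rfl; exact Or.inl ⟨0, by omega, rfl⟩
    · rintro (⟨a, h', rfl⟩ | ⟨a, h1, h2, rfl⟩) <;> omega
  | succ n ih =>
    intro T hT hnc hc
    have h2n : 2 * n + 2 ∈ T := by
      by_contra h
      have hsub : T ⊆ range (2 * n + 2) := by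
        intro x hx
        have hx' := mem_range.mp (hT hx)
        have hne : x ≠ 2 * n + 2 := fun he => h (he ▸ hx)
        rw [mem_range]; omega
      have := nc_card_le hsub hnc
      omega
    have h2n1 : 2 * n + 1 ∉ T := fun h => hnc _ h (by simpa using h2n)
    have hsub' : T.erase (2 * n + 2) ⊆ range (2 * n + 1) := by
      intro x hx
      have hxT := Finset.mem_of_mem_erase hx
      have hne := Finset.ne_of_mem_erase hx
      have hx1 : x ≠ 2 * n + 1 := fun he => h2n1 (he ▸ hxT)
      have := mem_range.mp (hT hxT)
      rw [mem_range]; omega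
    have hnc' : ∀ a ∈ T.erase (2 * n + 2), a + 1 ∉ T.erase (2 * n + 2) := fun a ha h =>
      hnc a (Finset.mem_of_mem_erase ha) (Finset.mem_of_mem_erase h)
    have hc' : (T.erase (2 * n + 2)).card = n + 1 := by
      rw [Finset.card_erase_of_mem h2n]; omega
    have hPhi := ih _ hsub' hnc' hc'
    have hTeq : T = insert (2 * n + 2) (T.erase (2 * n + 2)) :=
      (Finset.insert_erase h2n).symm
    rw [hTeq, hPhi]
    ext x
    simp only [Finset.mem_insert, mem_Phi]
    constructor
    · rintro (rfl | ⟨a, h', rfl⟩ | ⟨a, h1, h2, rfl⟩)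
      · exact Or.inl ⟨n + 1, by omega, by omega⟩
      · exact Or.inl ⟨a, by omega, rfl⟩
      · omega
    · rintro (⟨a, h', rfl⟩ | ⟨a, h1, h2, rfl⟩)
      · rcases Nat.lt_or_ge a (n + 1) with h'' | h''
        · exact Or.inr (Or.inl ⟨a, h'', rfl⟩)
        · left; omega
      · omega

lemma classify_even (n : ℕ) : ∀ T : Finset ℕ, T ⊆ range (2 * n + 2) →
    (∀ a ∈ T, a + 1 ∉ T) → T.card = n + 1 → ∃ t ≤ n + 1, T = Phi (n + 1) t := by
  induction n with
  | zero =>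
    intro T hT hnc hc
    obtain ⟨a, rfl⟩ := Finset.card_eq_one.mp hc
    have ha : a ∈ range 2 := hT (mem_singleton_self a)
    rw [mem_range] at ha
    interval_cases a
    · refine ⟨1, by omega, ?_⟩
      ext x
      simp only [mem_singleton, mem_Phi]
      constructor
      · rintro rfl; exact Or.inl ⟨0, by omega, rfl⟩
      · rintro (⟨a, h', rfl⟩ | ⟨a, h1, h2, rfl⟩) <;> omega
    · refine ⟨0, by omega, ?_⟩
      ext x
      simp only [mem_singleton, mem_Phi]
      constructor
      · rintro rfl; exact Or.inr ⟨0, by omega, by omega, rfl⟩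
      · rintro (⟨a, h', rfl⟩ | ⟨a, h1, h2, rfl⟩) <;> omega
  | succ n ih =>
    intro T hT hnc hc
    by_cases h : 2 * n + 3 ∈ T
    · have h2 : 2 * n + 2 ∉ T := fun h' => hnc _ h' h
      have hsub' : T.erase (2 * n + 3) ⊆ range (2 * n + 2) := by
        intro x hx
        have hxT := Finset.mem_of_mem_erase hx
        have hne := Finset.ne_of_mem_erase hx
        have hx2 : x ≠ 2 * n + 2 := fun he => h2 (he ▸ hxT)
        have := mem_range.mp (hT hxT)
        rw [mem_range]; omega
      have hnc' : ∀ a ∈ T.erase (2 * n + 3), a + 1 ∉ T.erase (2 * n + 3) := fun a ha hb =>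
        hnc a (Finset.mem_of_mem_erase ha) (Finset.mem_of_mem_erase hb)
      have hc' : (T.erase (2 * n + 3)).card = n + 1 := by
        rw [Finset.card_erase_of_mem h]; omega
      obtain ⟨t, ht, hPhi⟩ := ih _ hsub' hnc' hc'
      refine ⟨t, by omega, ?_⟩
      have hTeq : T = insert (2 * n + 3) (T.erase (2 * n + 3)) :=
        (Finset.insert_erase h).symm
      rw [hTeq, hPhi]
      ext x
      simp only [Finset.mem_insert, mem_Phi]
      constructor
      · rintro (rfl | ⟨a, ha, rfl⟩ | ⟨a, h1, h2', rfl⟩)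
        · exact Or.inr ⟨n + 1, by omega, by omega, by omega⟩
        · exact Or.inl ⟨a, ha, rfl⟩
        · exact Or.inr ⟨a, h1, by omega, rfl⟩
      · rintro (⟨a, ha, rfl⟩ | ⟨a, h1, h2', rfl⟩)
        · exact Or.inr (Or.inl ⟨a, ha, rfl⟩)
        · rcases Nat.lt_or_ge a (n + 1) with h'' | h''
          · exact Or.inr (Or.inr ⟨a, h1, h'', rfl⟩)
          · left; omega
    · have hsub : T ⊆ range (2 * n + 3) := by
        intro x hx
        have hx' := mem_range.mp (hT hx)
        have hne : x ≠ 2 * n + 3 := fun he => h (he ▸ hx)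
        rw [mem_range]; omega
      exact ⟨n + 2, le_refl _, classify_odd (n + 1) T hsub hnc hc⟩

/-- Length of the residue class of `r` in `{1,…,m(2n+1)+p}`. -/
def Lf (n p r : ℕ) : ℕ := if r ≤ p then 2 * n + 2 else 2 * n + 1

/-- The indices `i` with `r + i*m ∈ S`. -/
def Tset (m n p : ℕ) (S : Finset ℕ) (r : ℕ) : Finset ℕ :=
  (range (Lf n p r)).filter (fun i => r + i * m ∈ S)

lemma rep_lt {m n p r i : ℕ} (hp : p ≤ m) (hr1 : 1 ≤ r)
    (hx : r + i * m ≤ m * (2 * n + 1) + p) : i < Lf n p r := by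
  unfold Lf
  rcases le_or_gt r p with hcase | hcase
  · rw [if_pos hcase]
    by_contra h
    push_neg at h
    have h2 : (2 * n + 2) * m ≤ i * m := Nat.mul_le_mul_right m h
    nlinarith
  · rw [if_neg (by omega)]
    by_contra h
    push_neg at h
    have h2 : (2 * n + 1) * m ≤ i * m := Nat.mul_le_mul_right m h
    nlinarith

lemma rep_le {m n p r i : ℕ} (hp : p ≤ m) (hr1 : 1 ≤ r) (hrm : r ≤ m)
    (hi : i < Lf n p r) : 1 ≤ r + i * m ∧ r + i * m ≤ m * (2 * n + 1) + p := by
  refine ⟨by omega, ?_⟩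
  unfold Lf at hi
  rcases le_or_gt r p with hcase | hcase
  · rw [if_pos hcase] at hi
    have h2 : i * m ≤ (2 * n + 1) * m := Nat.mul_le_mul_right m (by omega)
    nlinarith
  · rw [if_neg (by omega)] at hi
    have h2 : i * m ≤ (2 * n) * m := Nat.mul_le_mul_right m (by omega)
    nlinarith

lemma rep_unique {m r r' i i' : ℕ} (hm : 1 ≤ m) (hr1 : 1 ≤ r) (hrm : r ≤ m)
    (hr1' : 1 ≤ r') (hrm' : r' ≤ m)
    (h : r + i * m = r' + i' * m) : r = r' ∧ i = i' := by
  have h1 : (r - 1 + i * m) % m = r - 1 := by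
    rw [Nat.add_mul_mod_self_right, Nat.mod_eq_of_lt (by omega)]
  have h2 : (r' - 1 + i' * m) % m = r' - 1 := by
    rw [Nat.add_mul_mod_self_right, Nat.mod_eq_of_lt (by omega)]
  have he : r - 1 + i * m = r' - 1 + i' * m := by omega
  have hrr : r = r' := by rw [he] at h1; omega
  subst hrr
  have hii : i * m = i' * m := by omega
  exact ⟨rfl, Nat.eq_of_mul_eq_mul_right (by omega) hii⟩

lemma decomp {m n p : ℕ} (hm : 1 ≤ m) (hp : p ≤ m) {S : Finset ℕ}
    (hS : S ⊆ Finset.Icc 1 (m * (2 * n + 1) + p)) :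
    S = (Finset.Icc 1 m).biUnion
      (fun r => (Tset m n p S r).image (fun i => r + i * m)) := by
  ext x
  simp only [mem_biUnion, mem_image, Tset, mem_filter, mem_range, Finset.mem_Icc]
  constructor
  · intro hx
    obtain ⟨hx1, hx2⟩ := Finset.mem_Icc.mp (hS hx)
    have key : (x - 1) % m + 1 + (x - 1) / m * m = x := by
      have := Nat.mod_add_div' (x - 1) m
      omega
    have hrm : (x - 1) % m + 1 ≤ m := by
      have := Nat.mod_lt (x - 1) (show 0 < m by omega)
      omega
    refine ⟨(x - 1) % m + 1, ⟨by omega, hrm⟩, (x - 1) / m, ⟨?_, ?_⟩, key⟩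
    · exact rep_lt hp (by omega) (by rw [key]; exact hx2)
    · rw [key]; exact hx
  · rintro ⟨r, ⟨hr1, hrm⟩, i, ⟨hi, hmem⟩, rfl⟩
    exact hmem

lemma card_decomp {m n p : ℕ} (hm : 1 ≤ m) (hp : p ≤ m) {S : Finset ℕ}
    (hS : S ⊆ Finset.Icc 1 (m * (2 * n + 1) + p)) :
    S.card = ∑ r ∈ Finset.Icc 1 m, (Tset m n p S r).card := by
  conv_lhs => rw [decomp hm hp hS]
  rw [Finset.card_biUnion]
  · refine Finset.sum_congr rfl fun r hr => ?_
    refine Finset.card_image_of_injective _ (fun a b h => ?_)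
    have hab : a * m = b * m := by omega
    exact Nat.eq_of_mul_eq_mul_right (by omega) hab
  · intro r hr r' hr' hne
    rw [Function.onFun, Finset.disjoint_left]
    rintro x hx hx'
    simp only [mem_image] at hx hx'
    obtain ⟨i, _, rfl⟩ := hx
    obtain ⟨i', _, he⟩ := hx'
    rw [Finset.mem_coe, Finset.mem_Icc] at hr hr'
    exact hne ((rep_unique hm hr.1 hr.2 hr'.1 hr'.2 he.symm).1)

lemma Tset_nc {m n p : ℕ} {S : Finset ℕ} (hv : ∀ a ∈ S, a + m ∉ S) (r : ℕ) :
    ∀ i ∈ Tset m n p S r, i + 1 ∉ Tset m n p S r := by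
  intro i hi hi1
  simp only [Tset, mem_filter, mem_range] at hi hi1
  refine hv _ hi.2 ?_
  have he : r + (i + 1) * m = r + i * m + m := by ring
  rw [he] at hi1
  exact hi1.2

lemma Tset_card_le {m n p : ℕ} {S : Finset ℕ} (hv : ∀ a ∈ S, a + m ∉ S) (r : ℕ) :
    (Tset m n p S r).card ≤ n + 1 := by
  have h := nc_card_le (L := Lf n p r) (T := Tset m n p S r)
    (Finset.filter_subset _ _) (Tset_nc (n := n) (p := p) hv r)
  unfold Lf at h
  split at h <;> omega

lemma Tset_card_eq {m n p : ℕ} (hm : 1 ≤ m) (hp : p ≤ m) {S : Finset ℕ}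
    (hS : S ⊆ Finset.Icc 1 (m * (2 * n + 1) + p)) (hv : ∀ a ∈ S, a + m ∉ S)
    (hc : S.card = m * (n + 1)) :
    ∀ r ∈ Finset.Icc 1 m, (Tset m n p S r).card = n + 1 := by
  have hsum : ∑ r ∈ Finset.Icc 1 m, (Tset m n p S r).card
      = ∑ r ∈ Finset.Icc 1 m, (n + 1) := by
    rw [← card_decomp hm hp hS, hc, Finset.sum_const, Nat.card_Icc, smul_eq_mul,
      Nat.add_sub_cancel]
  exact fun r hr =>
    (Finset.sum_eq_sum_iff_of_le (fun r _ => Tset_card_le hv r)).mp hsum r hr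

/-- Every valid maximal `S` has each residue class equal to some `Phi`, recorded by its
even-element count. -/
lemma Tset_forced {m n p : ℕ} (hm : 1 ≤ m) (hp : p ≤ m) {S : Finset ℕ}
    (hS : S ⊆ Finset.Icc 1 (m * (2 * n + 1) + p)) (hv : ∀ a ∈ S, a + m ∉ S)
    (hc : S.card = m * (n + 1)) :
    ∀ r, 1 ≤ r → r ≤ m →
      Tset m n p S r = Phi (n + 1) (((Tset m n p S r).filter (fun x => x % 2 = 0)).card)
      ∧ ((Tset m n p S r).filter (fun x => x % 2 = 0)).card ≤ n + 1
      ∧ (p < r → ((Tset m n p S r).filter (fun x => x % 2 = 0)).card = n + 1) := by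
  intro r hr1 hrm
  have hcard := Tset_card_eq hm hp hS hv hc r (Finset.mem_Icc.mpr ⟨hr1, hrm⟩)
  have hnc := Tset_nc (n := n) (p := p) hv r
  rcases le_or_gt r p with hcase | hcase
  · have hsub : Tset m n p S r ⊆ range (2 * n + 2) := by
      intro i hi
      simp only [Tset, Lf, mem_filter, mem_range] at hi
      rw [mem_range]
      split at hi <;> omega
    obtain ⟨t, ht, hPhi⟩ := classify_even n _ hsub hnc hcard
    have hec : ((Tset m n p S r).filter (fun x => x % 2 = 0)).card = t := by
      rw [hPhi, Phi_evencount]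
    rw [hec]
    exact ⟨hPhi, ht, fun h' => absurd hcase (by omega)⟩
  · have hsub : Tset m n p S r ⊆ range (2 * n + 1) := by
      intro i hi
      simp only [Tset, Lf, mem_filter, mem_range] at hi
      rw [mem_range]
      split at hi <;> omega
    have hPhi := classify_odd n _ hsub hnc hcard
    have hec : ((Tset m n p S r).filter (fun x => x % 2 = 0)).card = n + 1 := by
      rw [hPhi, Phi_evencount]
    rw [hec]
    exact ⟨hPhi, le_refl _, fun _ => rfl⟩

/-- Encoding of a valid subset by the even-element counts of its first `p` residue classes. -/
def enc (m n p : ℕ) (S : Finset ℕ) : Fin p → Fin (n + 2) :=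
  fun r => ⟨min (((Tset m n p S (r.1 + 1)).filter (fun x => x % 2 = 0)).card) (n + 1), by
    have := min_le_right (((Tset m n p S (r.1 + 1)).filter (fun x => x % 2 = 0)).card) (n + 1)
    omega⟩

end Stmt13

/-- `C_m(m(2j-3) + p, m(j-1)) = j^p` for `j ≥ 2` and `0 ≤ p ≤ m`. -/
theorem stmt_13 (m j p : ℕ) (hm : 1 ≤ m) (hj : 2 ≤ j) (hp : p ≤ m) :
    Cm m (m * (2 * j - 3) + p) (m * (j - 1)) = j ^ p := by
  obtain ⟨n, rfl⟩ : ∃ n, j = n + 2 := ⟨j - 2, by omega⟩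
  have e1 : 2 * (n + 2) - 3 = 2 * n + 1 := by omega
  have e2 : n + 2 - 1 = n + 1 := by omega
  rw [e1, e2]
  have hcardfun : ((n : ℕ) + 2) ^ p = Fintype.card (Fin p → Fin (n + 2)) := by
    rw [Fintype.card_fun, Fintype.card_fin, Fintype.card_fin]
  unfold Cm
  rw [hcardfun, ← Finset.card_univ]
  refine Finset.card_bij (fun S _ => Stmt13.enc m n p S) (fun _ _ => Finset.mem_univ _) ?_ ?_
  · -- injectivity
    intro S1 h1 S2 h2 he
    simp only [Finset.mem_filter, Finset.mem_powersetCard] at h1 h2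
    obtain ⟨⟨hS1, hc1⟩, hv1⟩ := h1
    obtain ⟨⟨hS2, hc2⟩, hv2⟩ := h2
    rw [Stmt13.decomp hm hp hS1, Stmt13.decomp hm hp hS2]
    refine Finset.biUnion_congr rfl ?_
    intro r hr
    rw [Finset.mem_Icc] at hr
    obtain ⟨e1', hle1, htop1⟩ := Stmt13.Tset_forced hm hp hS1 hv1 hc1 r hr.1 hr.2
    obtain ⟨e2', hle2, htop2⟩ := Stmt13.Tset_forced hm hp hS2 hv2 hc2 r hr.1 hr.2
    have hecc : ((Stmt13.Tset m n p S1 r).filter (fun x => x % 2 = 0)).card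
        = ((Stmt13.Tset m n p S2 r).filter (fun x => x % 2 = 0)).card := by
      rcases le_or_gt r p with hc | hc
      · have hfin := congrFun he ⟨r - 1, by omega⟩
        simp only [Stmt13.enc, Fin.mk.injEq] at hfin
        have hr' : r - 1 + 1 = r := by omega
        rw [hr'] at hfin
        rwa [min_eq_left hle1, min_eq_left hle2] at hfin
      · rw [htop1 hc, htop2 hc]
    rw [e1', e2', hecc]
  · -- surjectivity
    intro g _
    classical
    set tv : ℕ → ℕ := fun r => if h : r - 1 < p then (g ⟨r - 1, h⟩ : ℕ) else n + 1 with htv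
    have htvle : ∀ r, tv r ≤ n + 1 := by
      intro r
      rw [htv]
      dsimp only
      split
      · exact Nat.lt_succ_iff.mp (Fin.is_lt _)
      · exact le_refl _
    have htvtop : ∀ r, 1 ≤ r → p < r → tv r = n + 1 := by
      intro r h1 h2
      rw [htv]
      dsimp only
      rw [dif_neg (by omega)]
    set Sg := (Finset.Icc 1 m).biUnion
      (fun r => (Stmt13.Phi (n + 1) (tv r)).image (fun i => r + i * m)) with hSgdef
    have hmemSg : ∀ x, x ∈ Sg ↔
        ∃ r, (1 ≤ r ∧ r ≤ m) ∧ ∃ i, i ∈ Stmt13.Phi (n + 1) (tv r) ∧ r + i * m = x := by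
      intro x
      rw [hSgdef]
      simp only [Finset.mem_biUnion, Finset.mem_image, Finset.mem_Icc]
    have hPhiL : ∀ r, 1 ≤ r → ∀ i ∈ Stmt13.Phi (n + 1) (tv r), i < Stmt13.Lf n p r := by
      intro r h1 i hi
      rcases le_or_gt r p with hc | hc
      · have h := Stmt13.Phi_subset (htvle r) hi
        rw [Finset.mem_range] at h
        unfold Stmt13.Lf
        rw [if_pos hc]
        omega
      · have h := Stmt13.Phi_top_subset ((htvtop r h1 hc) ▸ hi)
        rw [Finset.mem_range] at h
        unfold Stmt13.Lf
        rw [if_neg (by omega)]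
        omega
    have hSsub : Sg ⊆ Finset.Icc 1 (m * (2 * n + 1) + p) := by
      intro x hx
      rw [hmemSg] at hx
      obtain ⟨r, ⟨hr1, hrm⟩, i, hi, rfl⟩ := hx
      obtain ⟨a1, a2⟩ := Stmt13.rep_le (n := n) hp hr1 hrm (hPhiL r hr1 i hi)
      exact Finset.mem_Icc.mpr ⟨a1, a2⟩
    have hTg : ∀ r, 1 ≤ r → r ≤ m →
        Stmt13.Tset m n p Sg r = Stmt13.Phi (n + 1) (tv r) := by
      intro r hr1 hrm
      ext i
      simp only [Stmt13.Tset, Finset.mem_filter, Finset.mem_range]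
      constructor
      · rintro ⟨hiL, hmem⟩
        rw [hmemSg] at hmem
        obtain ⟨r', ⟨hr1', hrm'⟩, i', hi', he⟩ := hmem
        obtain ⟨hrr, hii⟩ := Stmt13.rep_unique hm hr1' hrm' hr1 hrm he
        subst hrr
        subst hii
        exact hi'
      · intro hi
        exact ⟨hPhiL r hr1 i hi, (hmemSg _).mpr ⟨r, ⟨hr1, hrm⟩, i, hi, rfl⟩⟩
    have hvg : ∀ a ∈ Sg, a + m ∉ Sg := by
      intro a ha hb
      rw [hmemSg] at ha hb
      obtain ⟨r, ⟨hr1, hrm⟩, i, hi, rfl⟩ := ha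
      obtain ⟨r', ⟨hr1', hrm'⟩, i', hi', he⟩ := hb
      obtain ⟨hrr, hii⟩ := Stmt13.rep_unique hm hr1' hrm' hr1 hrm
        (show r' + i' * m = r + (i + 1) * m by rw [he]; ring)
      subst hrr
      rw [hii] at hi'
      exact Stmt13.Phi_nc hi hi'
    have hcg : Sg.card = m * (n + 1) := by
      rw [Stmt13.card_decomp hm hp hSsub]
      have hconst : ∀ r ∈ Finset.Icc 1 m, (Stmt13.Tset m n p Sg r).card = n + 1 := by
        intro r hr
        rw [Finset.mem_Icc] at hr
        rw [hTg r hr.1 hr.2, Stmt13.Phi_card (htvle r)]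
      rw [Finset.sum_congr rfl hconst, Finset.sum_const, Nat.card_Icc, smul_eq_mul,
        Nat.add_sub_cancel]
    refine ⟨Sg, ?_, ?_⟩
    · simp only [Finset.mem_filter, Finset.mem_powersetCard]
      exact ⟨⟨hSsub, hcg⟩, hvg⟩
    · funext r
      apply Fin.ext
      simp only [Stmt13.enc]
      have hr1 : 1 ≤ r.1 + 1 := by omega
      have hrm : r.1 + 1 ≤ m := by have := r.2; omega
      rw [hTg (r.1 + 1) hr1 hrm, Stmt13.Phi_evencount]
      have htvr : tv (r.1 + 1) = (g r : ℕ) := by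
        rw [htv]
        simp only [Nat.add_sub_cancel]
        rw [dif_pos r.2]
      rw [htvr]
      have hlt := (g r).isLt
      omega
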